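/- Let R ∈ PPT(A₁:B₁) and Q ∈ PPT(A₂:B₂) be PPT positive operators. Then the PPT communication value is multiplicative: cv^PPT(R ⊗ Q) = cv^PPT(R)·cv^PPT(Q), where cv^PPT(X) = max{Tr[XΩ] : Ω ≥ 0, Γ(Ω) ≥ 0, Tr_A Ω = I^B}. -/

import Mathlib

open scoped BigOperators Kronecker ComplexOrder
open Matrix

noncomputable section

/-- A density operator: positive semidefinite with unit trace. -/
def IsDensity {ι : Type*} [Fintype ι] (ρ : Matrix ι ι ℂ) : Prop :=
  ρ.PosSemidef ∧ ρ.trace = 1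

/-- A separable bipartite positive operator: a nonnegative combination of
tensor products of positive operators. -/
def IsSep {ιA ιB : Type*} [Fintype ιA] [Fintype ιB]
    (Ω : Matrix (ιA × ιB) (ιA × ιB) ℂ) : Prop :=
  ∃ (n : ℕ) (a : Fin n → Matrix ιA ιA ℂ) (b : Fin n → Matrix ιB ιB ℂ),
    (∀ i, (a i).PosSemidef) ∧ (∀ i, (b i).PosSemidef) ∧
      Ω = ∑ i, a i ⊗ₖ b i

/-- Partial trace over the first (A) system. -/
def ptraceA {ιA ιB : Type*} [Fintype ιA]
    (Ω : Matrix (ιA × ιB) (ιA × ιB) ℂ) : Matrix ιB ιB ℂ :=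
  Matrix.of fun k l => ∑ i, Ω (i, k) (i, l)

/-- The Choi matrix of a linear map on matrices. -/
def choi {ιA ιB : Type*} [Fintype ιA] [DecidableEq ιA]
    (Φ : Matrix ιA ιA ℂ →ₗ[ℂ] Matrix ιB ιB ℂ) :
    Matrix (ιA × ιB) (ιA × ιB) ℂ :=
  Matrix.of fun p q => Φ (Matrix.single p.1 q.1 1) p.2 q.2

/-- A quantum channel: a completely positive (Choi matrix PSD) trace-preserving
linear map. -/
structure Channel (ιA ιB : Type*) [Fintype ιA] [DecidableEq ιA] [Fintype ιB] where
  map : Matrix ιA ιA ℂ →ₗ[ℂ] Matrix ιB ιB ℂ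
  cp : (choi map).PosSemidef
  tp : ∀ X, (map X).trace = X.trace

/-- The communication value, via the conic program over the separable cone:
`cv(N) = max { Tr[Ω J_N] : Ω separable, Tr_A Ω = I }`. -/
def cv {ιA ιB : Type*} [Fintype ιA] [DecidableEq ιA] [Fintype ιB] [DecidableEq ιB]
    (N : Channel ιA ιB) : ℝ :=
  sSup {r | ∃ Ω : Matrix (ιA × ιB) (ιA × ιB) ℂ,
    IsSep Ω ∧ ptraceA Ω = 1 ∧ r = ((Ω * choi N.map).trace).re}

/-- The operational communication value: supremum over finite families of input
states and POVMs of `∑_x Tr[Π_x N(ρ_x)]`. -/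
def cvOp {ιA ιB : Type*} [Fintype ιA] [DecidableEq ιA] [Fintype ιB] [DecidableEq ιB]
    (N : Channel ιA ιB) : ℝ :=
  sSup {r | ∃ (n : ℕ) (ρ : Fin n → Matrix ιA ιA ℂ) (E : Fin n → Matrix ιB ιB ℂ),
    (∀ x, IsDensity (ρ x)) ∧ (∀ x, (E x).PosSemidef) ∧ (∑ x, E x) = 1 ∧
      r = (∑ x, (E x * N.map (ρ x)).trace).re}

/-- Maximal overlap of a bipartite operator with product unit vectors
(`Λ²`, exponential of minus the geometric measure of entanglement). -/
def lam2 {ιA ιB : Type*} [Fintype ιA] [Fintype ιB]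
    (ω : Matrix (ιA × ιB) (ιA × ιB) ℂ) : ℝ :=
  sSup {r | ∃ (a : ιA → ℂ) (b : ιB → ℂ),
    (∑ i, ‖a i‖ ^ 2) = 1 ∧ (∑ k, ‖b k‖ ^ 2) = 1 ∧
      r = (star (fun p : ιA × ιB => a p.1 * b p.2) ⬝ᵥ
        ω *ᵥ fun p : ιA × ιB => a p.1 * b p.2).re}

end

/-- Partial transpose on the second (B) system. -/
def ptransposeB {ιA ιB : Type*}
    (Ω : Matrix (ιA × ιB) (ιA × ιB) ℂ) : Matrix (ιA × ιB) (ιA × ιB) ℂ :=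
  Matrix.of fun p q => Ω (p.1, q.2) (q.1, p.2)

/-- The PPT relaxation of the communication value of a bipartite operator `X`:
`cv^PPT(X) = max { Tr[XΩ] : Ω ≥ 0, Γ(Ω) ≥ 0, Tr_A Ω = I }`. -/
noncomputable def cvPPT {ιA ιB : Type*} [Fintype ιA] [Fintype ιB] [DecidableEq ιB]
    (X : Matrix (ιA × ιB) (ιA × ιB) ℂ) : ℝ :=
  sSup {r | ∃ Ω : Matrix (ιA × ιB) (ιA × ιB) ℂ,
    Ω.PosSemidef ∧ (ptransposeB Ω).PosSemidef ∧ ptraceA Ω = 1 ∧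
      r = ((X * Ω).trace).re}

/-- Tensor product of bipartite operators, reindexed along the cut
`A₁A₂ : B₁B₂`. -/
def tensorCut {ιA ιB ιA' ιB' : Type*}
    (R : Matrix (ιA × ιB) (ιA × ιB) ℂ) (Q : Matrix (ιA' × ιB') (ιA' × ιB') ℂ) :
    Matrix ((ιA × ιA') × (ιB × ιB')) ((ιA × ιA') × (ιB × ιB')) ℂ :=
  Matrix.of fun p q =>
    R (p.1.1, p.2.1) (q.1.1, q.2.1) * Q (p.1.2, p.2.2) (q.1.2, q.2.2)

namespace CvAux

variable {ι κ : Type*} [Fintype ι] [Fintype κ]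

lemma quad_eq_sum (M : Matrix ι ι ℂ) (x : ι → ℂ) :
    star x ⬝ᵥ M *ᵥ x = ∑ p, ∑ q, star (x p) * M p q * x q := by
  simp [dotProduct, mulVec, Finset.mul_sum, mul_assoc]

lemma nonneg_iff (z : ℂ) : 0 ≤ z ↔ 0 ≤ z.re ∧ z.im = 0 := by
  rw [Complex.le_def]
  constructor
  · rintro ⟨h1, h2⟩; exact ⟨by simpa using h1, h2.symm⟩
  · rintro ⟨h1, h2⟩; exact ⟨by simpa using h1, h2.symm⟩

lemma posSemidef_iff_eq_transpose_mul_self {M : Matrix ι ι ℂ} :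
    M.PosSemidef ↔ ∃ B : Matrix ι ι ℂ, M = Bᴴ * B := by
  classical
  constructor
  · intro h
    open scoped MatrixOrder in
    obtain ⟨B, hB⟩ := CStarAlgebra.nonneg_iff_eq_star_mul_self.mp h.nonneg
    exact ⟨B, hB⟩
  · rintro ⟨B, rfl⟩
    exact posSemidef_conjTranspose_mul_self B

lemma psd_diag_nonneg {M : Matrix ι ι ℂ} (hM : M.PosSemidef) (p : ι) : 0 ≤ M p p := by
  classical
  have h := hM.dotProduct_mulVec_nonneg (Pi.single p 1)
  rw [quad_eq_sum, Finset.sum_eq_single p] at h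
  · rw [Finset.sum_eq_single p] at h
    · simpa using h
    · intro q _ hq; simp [Pi.single_apply, hq]
    · simp
  · intro b _ hb
    simp [Pi.single_apply, hb]
  · simp

lemma psd_trace_nonneg {M : Matrix ι ι ℂ} (hM : M.PosSemidef) : 0 ≤ M.trace := by
  unfold Matrix.trace
  exact Finset.sum_nonneg fun i _ => psd_diag_nonneg hM i

lemma trace_mul_psd_nonneg {M N : Matrix ι ι ℂ} (hM : M.PosSemidef) (hN : N.PosSemidef) :
    0 ≤ (M * N).trace := by
  obtain ⟨B, hB⟩ := posSemidef_iff_eq_transpose_mul_self.mp hN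
  have : (M * N).trace = (B * M * Bᴴ).trace := by
    rw [hB, Matrix.trace_mul_comm, Matrix.mul_assoc, Matrix.mul_assoc,
      Matrix.trace_mul_comm, Matrix.mul_assoc]
  rw [this]
  exact psd_trace_nonneg (hM.mul_mul_conjTranspose_same B)

lemma smul_psd {M : Matrix ι ι ℂ} (hM : M.PosSemidef) {c : ℝ} (hc : 0 ≤ c) :
    ((c : ℂ) • M).PosSemidef := by
  refine .of_dotProduct_mulVec_nonneg ?_ ?_
  · have h1 := hM.1
    unfold Matrix.IsHermitian at *
    rw [conjTranspose_smul, h1]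
    simp
  · intro x
    rw [Matrix.smul_mulVec, dotProduct_smul]
    have h := hM.dotProduct_mulVec_nonneg x
    rw [nonneg_iff] at h ⊢
    rw [smul_eq_mul, Complex.mul_re, Complex.mul_im]
    constructor
    · simp only [Complex.ofReal_re, Complex.ofReal_im, zero_mul, sub_zero]
      exact mul_nonneg hc h.1
    · simp [h.2, Complex.ofReal_im]


lemma sum_two {p q : ι} (f : ι → ℂ) (hpq : p ≠ q) (h : ∀ a, a ≠ p → a ≠ q → f a = 0) :
    ∑ a, f a = f p + f q := by
  classical
  rw [← Finset.sum_pair hpq]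
  symm
  apply Finset.sum_subset (Finset.subset_univ _)
  intro a _ ha
  simp only [Finset.mem_insert, Finset.mem_singleton, not_or] at ha
  exact h a ha.1 ha.2

lemma diag_re_pair_le_trace {M : Matrix ι ι ℂ} (hM : M.PosSemidef) {p q : ι} (hpq : p ≠ q) :
    (M p p).re + (M q q).re ≤ M.trace.re := by
  classical
  rw [Matrix.trace, Complex.re_sum]
  rw [show (M p p).re + (M q q).re = ∑ a ∈ ({p, q} : Finset ι), (M.diag a).re by
    rw [Finset.sum_pair hpq]; rfl]
  apply Finset.sum_le_sum_of_subset_of_nonneg (Finset.subset_univ _)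
  intro i _ _
  exact ((nonneg_iff _).mp (psd_diag_nonneg hM i)).1

/-- entry bound for PSD matrices. -/
lemma psd_entry_re_bound {M : Matrix ι ι ℂ} (hM : M.PosSemidef) (p q : ι) (u : ℂ)
    (hu : ‖u‖ = 1) :
    (u * M p q).re ≤ M.trace.re := by
  classical
  have htr : 0 ≤ M.trace.re := ((nonneg_iff _).mp (psd_trace_nonneg hM)).1
  by_cases hpq : p = q
  · subst hpq
    have h0 : 0 ≤ M p p := psd_diag_nonneg hM p
    rw [nonneg_iff] at h0
    calc (u * M p p).re ≤ ‖u * M p p‖ := Complex.re_le_norm _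
      _ = (M p p).re := by
          rw [norm_mul, hu, one_mul, Complex.norm_def, Complex.normSq_apply, h0.2]
          simp only [mul_zero, add_zero]
          exact Real.sqrt_mul_self h0.1
      _ ≤ M.trace.re := by
          rw [Matrix.trace, Complex.re_sum]
          exact Finset.single_le_sum
            (fun i _ => ((nonneg_iff _).mp (psd_diag_nonneg hM i)).1) (Finset.mem_univ p)
  · set x : ι → ℂ := fun r => if r = p then -(star u) else if r = q then 1 else 0 with hx
    have hform := hM.dotProduct_mulVec_nonneg x
    rw [quad_eq_sum] at hform
    have houter : ∀ a, a ≠ p → a ≠ q → (∑ b, star (x a) * M a b * x b) = 0 := by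
      intro a hap haq
      apply Finset.sum_eq_zero
      intro b _
      simp [hx, hap, haq]
    rw [sum_two _ hpq houter] at hform
    have hinner : ∀ a, (∑ b, star (x a) * M a b * x b)
        = star (x a) * M a p * x p + star (x a) * M a q * x q := by
      intro a
      apply sum_two _ hpq
      intro b hbp hbq
      simp [hx, hbp, hbq]
    rw [hinner, hinner] at hform
    have hxp : x p = -(star u) := by simp [hx]
    have hxq : x q = 1 := by
      show (if q = p then -(star u) else if q = q then 1 else 0) = 1
      rw [if_neg (Ne.symm hpq), if_pos rfl]
    rw [hxp, hxq] at hform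
    have huu : u * star u = 1 := by
      rw [Complex.star_def, Complex.mul_conj, ← Complex.sq_norm, hu]
      norm_num
    have hherm : M q p = star (M p q) := by
      rw [← Matrix.conjTranspose_apply, hM.1]
    have hexp : star (-(star u)) * M p p * -(star u) + star (-(star u)) * M p q * 1
        + (star (1 : ℂ) * M q p * -(star u) + star (1 : ℂ) * M q q * 1)
        = (u * star u) * M p p + M q q - (u * M p q + star (u * M p q)) := by
      rw [hherm, StarMul.star_mul]
      simp only [star_neg, star_star, star_one]
      ring
    rw [hexp, huu, one_mul] at hform
    have hre := ((nonneg_iff _).mp hform).1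
    simp only [Complex.sub_re, Complex.add_re, Complex.star_def, Complex.conj_re] at hre
    have hpair := diag_re_pair_le_trace hM hpq
    linarith

end CvAux


section CvMain
open CvAux
set_option linter.unusedSectionVars false

variable {ιA ιB ιA' ιB' : Type*}
  [Fintype ιA] [DecidableEq ιA] [Fintype ιB] [DecidableEq ιB]
  [Fintype ιA'] [DecidableEq ιA'] [Fintype ιB'] [DecidableEq ιB']

/-- two-party Kronecker product directly on the product index. -/
def kron2 {α β : Type*} (A : Matrix α α ℂ) (B : Matrix β β ℂ) : Matrix (α × β) (α × β) ℂ :=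
  Matrix.of fun p q => A p.1 q.1 * B p.2 q.2

lemma kron2_mul {α β : Type*} [Fintype α] [Fintype β]
    (A A' : Matrix α α ℂ) (B B' : Matrix β β ℂ) :
    kron2 (A * A') (B * B') = kron2 A B * kron2 A' B' := by
  ext p q
  simp only [kron2, Matrix.mul_apply, Matrix.of_apply]
  rw [Fintype.sum_prod_type, Finset.sum_mul_sum]
  exact Finset.sum_congr rfl fun i _ => Finset.sum_congr rfl fun j _ => by ring

lemma kron2_conjTranspose {α β : Type*} (A : Matrix α α ℂ) (B : Matrix β β ℂ) :
    (kron2 A B)ᴴ = kron2 Aᴴ Bᴴ := by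
  ext p q
  simp only [kron2, Matrix.conjTranspose_apply, Matrix.of_apply, star_mul']

lemma kron2_posSemidef {α β : Type*} [Fintype α] [Fintype β]
    {A : Matrix α α ℂ} {B : Matrix β β ℂ} (hA : A.PosSemidef) (hB : B.PosSemidef) :
    (kron2 A B).PosSemidef := by
  obtain ⟨A', hA'⟩ := CvAux.posSemidef_iff_eq_transpose_mul_self.mp hA
  obtain ⟨B', hB'⟩ := CvAux.posSemidef_iff_eq_transpose_mul_self.mp hB
  have : kron2 A B = (kron2 A' B')ᴴ * kron2 A' B' := by
    rw [hA', hB', kron2_mul, kron2_conjTranspose]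
  rw [this]
  exact Matrix.posSemidef_conjTranspose_mul_self _

lemma ptransposeB_kron2 {α β : Type*} (A : Matrix α α ℂ) (B : Matrix β β ℂ) :
    ptransposeB (kron2 A B) = kron2 A Bᵀ := rfl

lemma ptraceA_kron2 {α β : Type*} [Fintype α] (A : Matrix α α ℂ) (B : Matrix β β ℂ) :
    ptraceA (kron2 A B) = A.trace • B := by
  ext k l
  simp only [ptraceA, kron2, Matrix.of_apply, Matrix.smul_apply, Matrix.trace,
    Matrix.diag, smul_eq_mul, Finset.sum_mul]

lemma kron2_one_one {α β : Type*} [Fintype α] [Fintype β] [DecidableEq α] [DecidableEq β] :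
    kron2 (1 : Matrix α α ℂ) (1 : Matrix β β ℂ) = 1 := by
  ext p q
  simp only [kron2, Matrix.of_apply, Matrix.one_apply, Prod.ext_iff]
  by_cases h1 : p.1 = q.1 <;> by_cases h2 : p.2 = q.2 <;> simp [h1, h2]

lemma ptransposeB_add (M N : Matrix (ιA × ιB) (ιA × ιB) ℂ) :
    ptransposeB (M + N) = ptransposeB M + ptransposeB N := rfl

lemma ptransposeB_smul (c : ℂ) (M : Matrix (ιA × ιB) (ιA × ιB) ℂ) :
    ptransposeB (c • M) = c • ptransposeB M := rfl

lemma ptraceA_add (M N : Matrix (ιA × ιB) (ιA × ιB) ℂ) :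
    ptraceA (M + N) = ptraceA M + ptraceA N := by
  ext k l
  simp [ptraceA, Finset.sum_add_distrib]

lemma ptraceA_smul (c : ℂ) (M : Matrix (ιA × ιB) (ιA × ιB) ℂ) :
    ptraceA (c • M) = c • ptraceA M := by
  ext k l
  simp [ptraceA, Finset.mul_sum]

lemma ptraceA_isHermitian {M : Matrix (ιA × ιB) (ιA × ιB) ℂ} (hM : M.IsHermitian) :
    (ptraceA M).IsHermitian := by
  ext k l
  simp only [Matrix.conjTranspose_apply, ptraceA, Matrix.of_apply, star_sum]
  exact Finset.sum_congr rfl fun i _ => by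
    rw [← Matrix.conjTranspose_apply, hM.eq]

lemma sum3_swap {α β γ : Type*} [Fintype α] [Fintype β] [Fintype γ]
    (f : α → β → γ → ℂ) :
    (∑ k : β, ∑ l : γ, ∑ i : α, f i k l) = ∑ i : α, ∑ k : β, ∑ l : γ, f i k l :=
  (Finset.sum_congr rfl fun _ _ => Finset.sum_comm).trans Finset.sum_comm

lemma ptraceA_posSemidef {M : Matrix (ιA × ιB) (ιA × ιB) ℂ} (hM : M.PosSemidef) :
    (ptraceA M).PosSemidef := by
  refine .of_dotProduct_mulVec_nonneg (ptraceA_isHermitian hM.1) fun x => ?_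
  set y : ιA → (ιA × ιB) → ℂ := fun i p => if p.1 = i then x p.2 else 0 with hy
  have key : ∀ i : ιA, star (y i) ⬝ᵥ M *ᵥ (y i)
      = ∑ k, ∑ l, star (x k) * M (i,k) (i,l) * x l := by
    intro i
    rw [quad_eq_sum, Fintype.sum_prod_type, Finset.sum_eq_single i]
    · refine Finset.sum_congr rfl fun k _ => ?_
      rw [Fintype.sum_prod_type, Finset.sum_eq_single i]
      · refine Finset.sum_congr rfl fun l _ => ?_
        simp [hy]
      · intro j _ hj
        apply Finset.sum_eq_zero; intro l _; simp [hy, hj]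
      · simp
    · intro j _ hj
      apply Finset.sum_eq_zero; intro k _
      apply Finset.sum_eq_zero; intro q _
      simp [hy, hj]
    · simp
  have lhs : star x ⬝ᵥ (ptraceA M) *ᵥ x
      = ∑ k, ∑ l, ∑ i, star (x k) * M (i,k) (i,l) * x l := by
    rw [quad_eq_sum]
    simp only [ptraceA, Matrix.of_apply, Finset.mul_sum, Finset.sum_mul]
  rw [lhs, sum3_swap]
  refine Finset.sum_nonneg fun i _ => ?_
  rw [← key]
  exact hM.dotProduct_mulVec_nonneg _

lemma trace_kron2 {α β : Type*} [Fintype α] [Fintype β] (A : Matrix α α ℂ) (B : Matrix β β ℂ) :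
    (kron2 A B).trace = A.trace * B.trace := by
  simp only [Matrix.trace, Matrix.diag, kron2, Matrix.of_apply]
  rw [Fintype.sum_prod_type, Finset.sum_mul_sum]

lemma sum4_swap23 {α β γ δ : Type*} [Fintype α] [Fintype β] [Fintype γ] [Fintype δ]
    (f : α → β → γ → δ → ℂ) :
    (∑ a : α, ∑ b : β, ∑ c : γ, ∑ d : δ, f a b c d)
      = ∑ a : α, ∑ c : γ, ∑ b : β, ∑ d : δ, f a b c d :=
  Finset.sum_congr rfl fun _ _ => Finset.sum_comm

lemma tensorCut_mul (M M' : Matrix (ιA × ιB) (ιA × ιB) ℂ)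
    (N N' : Matrix (ιA' × ιB') (ιA' × ιB') ℂ) :
    tensorCut (M * M') (N * N') = tensorCut M N * tensorCut M' N' := by
  ext p q
  simp only [tensorCut, Matrix.mul_apply, Matrix.of_apply, Fintype.sum_prod_type,
    Finset.sum_mul_sum]
  refine Finset.sum_congr rfl fun s1 _ => Finset.sum_congr rfl fun s2 _ =>
    Finset.sum_congr rfl fun s3 _ => Finset.sum_congr rfl fun s4 _ => by ring

lemma tensorCut_conjTranspose (M : Matrix (ιA × ιB) (ιA × ιB) ℂ)
    (N : Matrix (ιA' × ιB') (ιA' × ιB') ℂ) :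
    (tensorCut M N)ᴴ = tensorCut Mᴴ Nᴴ := by
  ext p q
  simp only [tensorCut, Matrix.conjTranspose_apply, Matrix.of_apply, star_mul']

lemma tensorCut_posSemidef {M : Matrix (ιA × ιB) (ιA × ιB) ℂ}
    {N : Matrix (ιA' × ιB') (ιA' × ιB') ℂ} (hM : M.PosSemidef) (hN : N.PosSemidef) :
    (tensorCut M N).PosSemidef := by
  obtain ⟨A', hA'⟩ := CvAux.posSemidef_iff_eq_transpose_mul_self.mp hM
  obtain ⟨B', hB'⟩ := CvAux.posSemidef_iff_eq_transpose_mul_self.mp hN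
  have : tensorCut M N = (tensorCut A' B')ᴴ * tensorCut A' B' := by
    rw [hA', hB', tensorCut_mul, tensorCut_conjTranspose]
  rw [this]
  exact Matrix.posSemidef_conjTranspose_mul_self _

lemma ptransposeB_tensorCut (M : Matrix (ιA × ιB) (ιA × ιB) ℂ)
    (N : Matrix (ιA' × ιB') (ιA' × ιB') ℂ) :
    ptransposeB (tensorCut M N) = tensorCut (ptransposeB M) (ptransposeB N) := rfl

lemma ptraceA_tensorCut (M : Matrix (ιA × ιB) (ιA × ιB) ℂ)
    (N : Matrix (ιA' × ιB') (ιA' × ιB') ℂ) :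
    ptraceA (tensorCut M N) = kron2 (ptraceA M) (ptraceA N) := by
  ext k l
  simp only [ptraceA, tensorCut, kron2, Matrix.of_apply, Fintype.sum_prod_type,
    Finset.sum_mul_sum]

lemma trace_tensorCut (M : Matrix (ιA × ιB) (ιA × ιB) ℂ)
    (N : Matrix (ιA' × ιB') (ιA' × ιB') ℂ) :
    (tensorCut M N).trace = M.trace * N.trace := by
  simp only [Matrix.trace, Matrix.diag, tensorCut, Matrix.of_apply, Fintype.sum_prod_type,
    Finset.sum_mul_sum]

section CvPPTBasic
variable (X : Matrix (ιA × ιB) (ιA × ιB) ℂ)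

lemma feas_trace {Ω : Matrix (ιA × ιB) (ιA × ιB) ℂ} (hTr : ptraceA Ω = 1) :
    Ω.trace = (Fintype.card ιB : ℂ) := by
  have key : ∀ k : ιB, (∑ i, Ω (i,k) (i,k)) = 1 := by
    intro k
    have := congrFun (congrFun hTr k) k
    simpa [ptraceA, Matrix.one_apply] using this
  simp only [Matrix.trace, Matrix.diag, Fintype.sum_prod_type]
  rw [Finset.sum_comm]
  simp only [key]
  simp [Finset.card_univ]

lemma pairing_term_bound {ι : Type*} [Fintype ι] {Ω : Matrix ι ι ℂ} (hΩ : Ω.PosSemidef)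
    (c : ℂ) (p q : ι) :
    (c * Ω q p).re ≤ ‖c‖ * Ω.trace.re := by
  by_cases hc : c = 0
  · simp [hc]
  · set u : ℂ := (↑‖c‖)⁻¹ * c with hu
    have habs : ‖u‖ = 1 := by
      rw [hu, norm_mul, norm_inv, Complex.norm_real, Real.norm_eq_abs, abs_of_nonneg (norm_nonneg c)]
      field_simp [norm_ne_zero_iff.mpr hc]
    have hc' : c = ↑‖c‖ * u := by
      rw [hu, ← mul_assoc, mul_inv_cancel₀, one_mul]
      exact_mod_cast norm_ne_zero_iff.mpr hc
    calc (c * Ω q p).re = ((‖c‖ : ℂ) * (u * Ω q p)).re := by rw [← mul_assoc, ← hc']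
      _ = ‖c‖ * (u * Ω q p).re := by
          rw [Complex.mul_re]
          simp [Complex.ofReal_re, Complex.ofReal_im]
      _ ≤ ‖c‖ * Ω.trace.re :=
          mul_le_mul_of_nonneg_left (psd_entry_re_bound hΩ q p u habs) (norm_nonneg c)

lemma trace_mul_expand {ι : Type*} [Fintype ι] (X Ω : Matrix ι ι ℂ) :
    (X * Ω).trace = ∑ p, ∑ q, X p q * Ω q p := by
  simp [Matrix.trace, Matrix.diag, Matrix.mul_apply]

lemma value_bound {Ω : Matrix (ιA × ιB) (ιA × ιB) ℂ} (hΩ : Ω.PosSemidef)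
    (hTr : ptraceA Ω = 1) :
    ((X * Ω).trace).re ≤ (∑ p, ∑ q, ‖X p q‖) * (Fintype.card ιB : ℝ) := by
  rw [trace_mul_expand, Complex.re_sum, Finset.sum_mul]
  refine Finset.sum_le_sum fun p _ => ?_
  rw [Complex.re_sum, Finset.sum_mul]
  refine Finset.sum_le_sum fun q _ => ?_
  have h := pairing_term_bound hΩ (X p q) p q
  rwa [feas_trace hTr, Complex.natCast_re] at h

lemma bddAbove_cvSet : BddAbove {r | ∃ Ω : Matrix (ιA × ιB) (ιA × ιB) ℂ,
    Ω.PosSemidef ∧ (ptransposeB Ω).PosSemidef ∧ ptraceA Ω = 1 ∧ r = ((X * Ω).trace).re} := by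
  refine ⟨(∑ p, ∑ q, ‖X p q‖) * (Fintype.card ιB : ℝ), ?_⟩
  rintro r ⟨Ω, h1, _, h3, rfl⟩
  exact value_bound X h1 h3

lemma le_cvPPT {Ω : Matrix (ιA × ιB) (ιA × ιB) ℂ} (h1 : Ω.PosSemidef)
    (h2 : (ptransposeB Ω).PosSemidef) (h3 : ptraceA Ω = 1) :
    ((X * Ω).trace).re ≤ cvPPT X :=
  le_csSup (bddAbove_cvSet X) ⟨Ω, h1, h2, h3, rfl⟩

lemma cvPPT_nonneg (hX : X.PosSemidef) : 0 ≤ cvPPT X := by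
  by_cases h : ∃ Ω : Matrix (ιA × ιB) (ιA × ιB) ℂ,
      Ω.PosSemidef ∧ (ptransposeB Ω).PosSemidef ∧ ptraceA Ω = 1
  · obtain ⟨Ω, h1, h2, h3⟩ := h
    refine le_trans ?_ (le_cvPPT X h1 h2 h3)
    exact ((nonneg_iff _).mp (trace_mul_psd_nonneg hX h1)).1
  · have hempty : {r | ∃ Ω : Matrix (ιA × ιB) (ιA × ιB) ℂ,
        Ω.PosSemidef ∧ (ptransposeB Ω).PosSemidef ∧ ptraceA Ω = 1 ∧ r = ((X * Ω).trace).re}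
        = (∅ : Set ℝ) := by
      ext r
      simp only [Set.mem_setOf_eq, Set.mem_empty_iff_false, iff_false]
      rintro ⟨Ω, h1, h2, h3, _⟩
      exact h ⟨Ω, h1, h2, h3⟩
    rw [cvPPT, hempty, Real.sSup_empty]

end CvPPTBasic

section UpperBound

lemma quad_eq_sum' {ι : Type*} [Fintype ι] (M : Matrix ι ι ℂ) (x : ι → ℂ) :
    star x ⬝ᵥ M *ᵥ x = ∑ z : ι × ι, star (x z.1) * M z.1 z.2 * x z.2 :=
  (quad_eq_sum M x).trans
    (Fintype.sum_prod_type' (f := fun p q => star (x p) * M p q * x q)).symm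

lemma trace_mul_expand' {ι : Type*} [Fintype ι] (X Ω : Matrix ι ι ℂ) :
    (X * Ω).trace = ∑ z : ι × ι, X z.1 z.2 * Ω z.2 z.1 :=
  (trace_mul_expand X Ω).trans
    (Fintype.sum_prod_type' (f := fun p q => X p q * Ω q p)).symm

/-- partial contraction of a big bipartite operator against `Q` on the primed systems. -/
noncomputable def ctrQ (Q : Matrix (ιA' × ιB') (ιA' × ιB') ℂ)
    (Ω : Matrix ((ιA × ιA') × (ιB × ιB')) ((ιA × ιA') × (ιB × ιB')) ℂ) :
    Matrix (ιA × ιB) (ιA × ιB) ℂ :=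
  Matrix.of fun x y => ∑ z : (ιA' × ιB') × (ιA' × ιB'),
    Q z.1 z.2 * Ω ((x.1, z.2.1), (x.2, z.2.2)) ((y.1, z.1.1), (y.2, z.1.2))

def eL1 : (((ιA × ιB) × (ιA × ιB)) × ((ιA' × ιB') × (ιA' × ιB'))) ≃
    (((ιA × ιA') × (ιB × ιB')) × ((ιA × ιA') × (ιB × ιB'))) where
  toFun y := (((y.1.1.1, y.2.1.1), (y.1.1.2, y.2.1.2)), ((y.1.2.1, y.2.2.1), (y.1.2.2, y.2.2.2)))
  invFun z := (((z.1.1.1, z.1.2.1), (z.2.1.1, z.2.2.1)), ((z.1.1.2, z.1.2.2), (z.2.1.2, z.2.2.2)))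
  left_inv y := rfl
  right_inv z := rfl

lemma ctrQ_pairing (R : Matrix (ιA × ιB) (ιA × ιB) ℂ)
    (Q : Matrix (ιA' × ιB') (ιA' × ιB') ℂ)
    (Ω : Matrix ((ιA × ιA') × (ιB × ιB')) ((ιA × ιA') × (ιB × ιB')) ℂ) :
    (tensorCut R Q * Ω).trace = (R * ctrQ Q Ω).trace := by
  rw [trace_mul_expand', trace_mul_expand']
  have step : ∑ z : (((ιA × ιA') × (ιB × ιB')) × ((ιA × ιA') × (ιB × ιB'))),
      tensorCut R Q z.1 z.2 * Ω z.2 z.1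
      = ∑ y : (((ιA × ιB) × (ιA × ιB)) × ((ιA' × ιB') × (ιA' × ιB'))),
        R y.1.1 y.1.2 * (Q y.2.1 y.2.2
          * Ω ((y.1.2.1, y.2.2.1), (y.1.2.2, y.2.2.2)) ((y.1.1.1, y.2.1.1), (y.1.1.2, y.2.1.2))) := by
    refine (Fintype.sum_equiv eL1 _ _ fun y => ?_).symm
    simp only [eL1, Equiv.coe_fn_mk, tensorCut, Matrix.of_apply]
    ring
  rw [step, Fintype.sum_prod_type]
  refine Finset.sum_congr rfl fun uw _ => ?_
  simp only [ctrQ, Matrix.of_apply, Finset.mul_sum]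

def eFlip : ((ιA' × ιB') × (ιA' × ιB')) ≃ ((ιA' × ιB') × (ιA' × ιB')) where
  toFun z := ((z.1.1, z.2.2), (z.2.1, z.1.2))
  invFun z := ((z.1.1, z.2.2), (z.2.1, z.1.2))
  left_inv z := rfl
  right_inv z := rfl

lemma ctrQ_ptransposeB (Q : Matrix (ιA' × ιB') (ιA' × ιB') ℂ)
    (Ω : Matrix ((ιA × ιA') × (ιB × ιB')) ((ιA × ιA') × (ιB × ιB')) ℂ) :
    ptransposeB (ctrQ Q Ω) = ctrQ (ptransposeB Q) (ptransposeB Ω) := by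
  ext x y
  show ctrQ Q Ω (x.1, y.2) (y.1, x.2) = _
  simp only [ctrQ, Matrix.of_apply, ptransposeB]
  refine Fintype.sum_equiv eFlip _ _ fun z => ?_
  simp only [eFlip, Equiv.coe_fn_mk, Matrix.of_apply]

end UpperBound

lemma herm_entry {ι : Type*} {M : Matrix ι ι ℂ} (h : M.IsHermitian) (a b : ι) :
    star (M a b) = M b a := by rw [← Matrix.conjTranspose_apply, h]

lemma ctrQ_isHermitian {Q : Matrix (ιA' × ιB') (ιA' × ιB') ℂ}
    {Ω : Matrix ((ιA × ιA') × (ιB × ιB')) ((ιA × ιA') × (ιB × ιB')) ℂ}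
    (hQ : Q.IsHermitian) (hΩ : Ω.IsHermitian) : (ctrQ Q Ω).IsHermitian := by
  ext x y
  show star (ctrQ Q Ω y x) = ctrQ Q Ω x y
  simp only [ctrQ, Matrix.of_apply, star_sum, star_mul', herm_entry hQ, herm_entry hΩ]
  exact Fintype.sum_equiv (Equiv.prodComm _ _) _ _ fun z => rfl

def eL2 : (((ιA × ιB) × (ιA × ιB)) × ((ιA' × ιB') × (ιA' × ιB'))) ≃
    (((ιA × ιA') × (ιB × ιB')) × ((ιA × ιA') × (ιB × ιB'))) where
  toFun y := (((y.1.1.1, y.2.2.1), (y.1.1.2, y.2.2.2)), ((y.1.2.1, y.2.1.1), (y.1.2.2, y.2.1.2)))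
  invFun z := (((z.1.1.1, z.1.2.1), (z.2.1.1, z.2.2.1)), ((z.2.1.2, z.2.2.2), (z.1.1.2, z.1.2.2)))
  left_inv y := rfl
  right_inv z := rfl

lemma ctrQ_posSemidef {Q : Matrix (ιA' × ιB') (ιA' × ιB') ℂ}
    {Ω : Matrix ((ιA × ιA') × (ιB × ιB')) ((ιA × ιA') × (ιB × ιB')) ℂ}
    (hQ : Q.PosSemidef) (hΩ : Ω.PosSemidef) : (ctrQ Q Ω).PosSemidef := by
  obtain ⟨B, hB⟩ := CvAux.posSemidef_iff_eq_transpose_mul_self.mp hQ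
  refine .of_dotProduct_mulVec_nonneg (ctrQ_isHermitian hQ.1 hΩ.1) fun c => ?_
  set w : (ιA' × ιB') → ((ιA × ιA') × (ιB × ιB')) → ℂ :=
    fun m P => c (P.1.1, P.2.1) * star (B m (P.1.2, P.2.2)) with hw
  have key : star c ⬝ᵥ (ctrQ Q Ω) *ᵥ c = ∑ m : ιA' × ιB', star (w m) ⬝ᵥ Ω *ᵥ (w m) := by
    have perm : ∀ m, star (w m) ⬝ᵥ Ω *ᵥ (w m)
        = ∑ z : (ιA × ιB) × (ιA × ιB), ∑ v : (ιA' × ιB') × (ιA' × ιB'),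
          star (c z.1) * ((star (B m v.1) * B m v.2)
            * Ω ((z.1.1, v.2.1), (z.1.2, v.2.2)) ((z.2.1, v.1.1), (z.2.2, v.1.2)))
            * c z.2 := by
      intro m
      rw [quad_eq_sum']
      have e1 := (Fintype.sum_equiv eL2
        (fun y : (((ιA × ιB) × (ιA × ιB)) × ((ιA' × ιB') × (ιA' × ιB'))) =>
          star (c y.1.1) * ((star (B m y.2.1) * B m y.2.2)
            * Ω ((y.1.1.1, y.2.2.1), (y.1.1.2, y.2.2.2)) ((y.1.2.1, y.2.1.1), (y.1.2.2, y.2.1.2)))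
            * c y.1.2)
        (fun zz => star (w m zz.1) * Ω zz.1 zz.2 * w m zz.2)
        (fun y => by
          simp only [eL2, Equiv.coe_fn_mk, hw, star_mul', star_star]
          ring)).symm
      rw [e1]
      exact Fintype.sum_prod_type _
    rw [quad_eq_sum']
    simp only [ctrQ, Matrix.of_apply, hB, Matrix.mul_apply, Matrix.conjTranspose_apply,
      Finset.sum_mul, Finset.mul_sum]
    rw [sum3_swap]
    refine Finset.sum_congr rfl fun m _ => ?_
    rw [perm m]
  rw [key]
  exact Finset.sum_nonneg fun m _ => hΩ.dotProduct_mulVec_nonneg (w m)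

/-- compression of the big operator by a vector on `ιB`, keeping `ιA` traced later. -/
noncomputable def cmpB0 (x : ιB → ℂ)
    (Ω : Matrix ((ιA × ιA') × (ιB × ιB')) ((ιA × ιA') × (ιB × ιB')) ℂ) :
    Matrix (ιA × (ιA' × ιB')) (ιA × (ιA' × ιB')) ℂ :=
  Matrix.of fun a b => ∑ z : ιB × ιB, star (x z.1) * x z.2 *
    Ω ((a.1, a.2.1), (z.1, a.2.2)) ((b.1, b.2.1), (z.2, b.2.2))

lemma cmpB0_isHermitian {x : ιB → ℂ}
    {Ω : Matrix ((ιA × ιA') × (ιB × ιB')) ((ιA × ιA') × (ιB × ιB')) ℂ}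
    (hΩ : Ω.IsHermitian) : (cmpB0 x Ω).IsHermitian := by
  ext a b
  show star (cmpB0 x Ω b a) = cmpB0 x Ω a b
  simp only [cmpB0, Matrix.of_apply, star_sum, star_mul', star_star, herm_entry hΩ]
  refine Fintype.sum_equiv (Equiv.prodComm _ _) _ _ fun z => ?_
  simp only [Equiv.prodComm_apply, Prod.swap]
  ring

def eCmp : (((ιA × (ιA' × ιB')) × (ιA × (ιA' × ιB'))) × (ιB × ιB)) ≃
    (((ιA × ιA') × (ιB × ιB')) × ((ιA × ιA') × (ιB × ιB'))) where
  toFun y := (((y.1.1.1, y.1.1.2.1), (y.2.1, y.1.1.2.2)),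
              ((y.1.2.1, y.1.2.2.1), (y.2.2, y.1.2.2.2)))
  invFun z := (((z.1.1.1, (z.1.1.2, z.1.2.2)), (z.2.1.1, (z.2.1.2, z.2.2.2))),
               (z.1.2.1, z.2.2.1))
  left_inv y := rfl
  right_inv z := rfl

lemma cmpB0_posSemidef {x : ιB → ℂ}
    {Ω : Matrix ((ιA × ιA') × (ιB × ιB')) ((ιA × ιA') × (ιB × ιB')) ℂ}
    (hΩ : Ω.PosSemidef) : (cmpB0 x Ω).PosSemidef := by
  refine .of_dotProduct_mulVec_nonneg (cmpB0_isHermitian hΩ.1) fun c => ?_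
  set wv : ((ιA × ιA') × (ιB × ιB')) → ℂ :=
    fun P => c (P.1.1, (P.1.2, P.2.2)) * x P.2.1 with hwv
  have key : star c ⬝ᵥ (cmpB0 x Ω) *ᵥ c = star wv ⬝ᵥ Ω *ᵥ wv := by
    have e1 : star wv ⬝ᵥ Ω *ᵥ wv
        = ∑ y : (ιA × (ιA' × ιB')) × (ιA × (ιA' × ιB')), ∑ z : ιB × ιB,
          star (c y.1) * (star (x z.1) * x z.2 *
            Ω ((y.1.1, y.1.2.1), (z.1, y.1.2.2)) ((y.2.1, y.2.2.1), (z.2, y.2.2.2))) * c y.2 := by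
      rw [quad_eq_sum']
      rw [(Fintype.sum_equiv eCmp
        (fun w : (((ιA × (ιA' × ιB')) × (ιA × (ιA' × ιB'))) × (ιB × ιB)) =>
          star (c w.1.1) * (star (x w.2.1) * x w.2.2 *
            Ω ((w.1.1.1, w.1.1.2.1), (w.2.1, w.1.1.2.2))
              ((w.1.2.1, w.1.2.2.1), (w.2.2, w.1.2.2.2))) * c w.1.2)
        (fun zz => star (wv zz.1) * Ω zz.1 zz.2 * wv zz.2)
        (fun y => by
          simp only [eCmp, Equiv.coe_fn_mk, hwv, star_mul', star_star]
          ring)).symm]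
      exact Fintype.sum_prod_type _
    rw [quad_eq_sum', e1]
    simp only [cmpB0, Matrix.of_apply, Finset.sum_mul, Finset.mul_sum]
  rw [key]
  exact hΩ.dotProduct_mulVec_nonneg wv

lemma cmpB0_ptranspose (x : ιB → ℂ)
    (Ω : Matrix ((ιA × ιA') × (ιB × ιB')) ((ιA × ιA') × (ιB × ιB')) ℂ) :
    ptransposeB (ptraceA (cmpB0 x Ω))
      = ptraceA (cmpB0 (fun k => star (x k)) (ptransposeB Ω)) := by
  ext a b
  show (ptraceA (cmpB0 x Ω)) (a.1, b.2) (b.1, a.2) = _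
  simp only [ptraceA, cmpB0, ptransposeB, Matrix.of_apply]
  refine Finset.sum_congr rfl fun i _ => ?_
  refine Fintype.sum_equiv (Equiv.prodComm _ _) _ _ fun z => ?_
  simp only [Equiv.prodComm_apply, Prod.swap, star_star]
  ring

lemma cmpB0_ptrace_ptrace (x : ιB → ℂ)
    {Ω : Matrix ((ιA × ιA') × (ιB × ιB')) ((ιA × ιA') × (ιB × ιB')) ℂ}
    (h3 : ptraceA Ω = 1) :
    ptraceA (ptraceA (cmpB0 x Ω)) = (∑ k, star (x k) * x k) • (1 : Matrix ιB' ιB' ℂ) := by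
  ext k' l'
  have inner : ∀ z : ιB × ιB, (∑ i' : ιA', ∑ i : ιA, Ω ((i,i'),(z.1,k')) ((i,i'),(z.2,l')))
      = if z.1 = z.2 ∧ k' = l' then 1 else 0 := by
    intro z
    have h := congrFun (congrFun h3 (z.1, k')) (z.2, l')
    simp only [ptraceA, Matrix.of_apply, Matrix.one_apply] at h
    rw [Fintype.sum_prod_type, Finset.sum_comm] at h
    rw [h]
    simp [Prod.ext_iff]
  show (∑ i' : ιA', ∑ i : ιA, cmpB0 x Ω (i,(i',k')) (i,(i',l'))) = _
  simp only [cmpB0, Matrix.of_apply]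
  rw [sum3_swap]
  have pull : ∀ z : ιB × ιB,
      (∑ i' : ιA', ∑ i : ιA, star (x z.1) * x z.2 * Ω ((i,i'),(z.1,k')) ((i,i'),(z.2,l')))
      = star (x z.1) * x z.2 * (if z.1 = z.2 ∧ k' = l' then 1 else 0) := by
    intro z
    rw [← inner z, Finset.mul_sum]
    exact Finset.sum_congr rfl fun i' _ => by rw [Finset.mul_sum]
  rw [Finset.sum_congr rfl fun z _ => pull z]
  rw [Matrix.smul_apply, Matrix.one_apply, Fintype.sum_prod_type]
  by_cases hkl : k' = l'
  · simp only [hkl, and_true, if_true, smul_eq_mul, mul_one]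
    simp [Finset.sum_ite_eq, mul_ite, mul_one, mul_zero]
  · simp [hkl]

lemma sigma_pairing (Q : Matrix (ιA' × ιB') (ιA' × ιB') ℂ)
    (Ω : Matrix ((ιA × ιA') × (ιB × ιB')) ((ιA × ιA') × (ιB × ιB')) ℂ) (xv : ιB → ℂ) :
    star xv ⬝ᵥ (ptraceA (ctrQ Q Ω)) *ᵥ xv = (Q * ptraceA (cmpB0 xv Ω)).trace := by
  rw [quad_eq_sum', trace_mul_expand']
  simp only [ptraceA, ctrQ, cmpB0, Matrix.of_apply, Finset.sum_mul, Finset.mul_sum]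
  rw [sum3_swap]
  refine Finset.sum_congr rfl fun w _ => ?_
  rw [Finset.sum_comm]
  exact Finset.sum_congr rfl fun j _ => Finset.sum_congr rfl fun z _ => by ring

lemma upper_pointwise [Nonempty ιA]
    (R : Matrix (ιA × ιB) (ιA × ιB) ℂ) (Q : Matrix (ιA' × ιB') (ιA' × ιB') ℂ)
    (hR : R.PosSemidef) (hQ : Q.PosSemidef) (hQppt : (ptransposeB Q).PosSemidef)
    {Ω : Matrix ((ιA × ιA') × (ιB × ιB')) ((ιA × ιA') × (ιB × ιB')) ℂ}
    (h1 : Ω.PosSemidef) (h2 : (ptransposeB Ω).PosSemidef) (h3 : ptraceA Ω = 1) :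
    ((tensorCut R Q * Ω).trace).re ≤ cvPPT R * cvPPT Q := by
  have hctr : (ctrQ Q Ω).PosSemidef := ctrQ_posSemidef hQ h1
  set σ : Matrix ιB ιB ℂ := ptraceA (ctrQ Q Ω) with hσdef
  have hσ : σ.PosSemidef := ptraceA_posSemidef hctr
  have hΓctr : (ptransposeB (ctrQ Q Ω)).PosSemidef := by
    rw [ctrQ_ptransposeB]; exact ctrQ_posSemidef hQppt h2
  have hQnn : 0 ≤ cvPPT Q := cvPPT_nonneg Q hQ
  have hRnn : 0 ≤ cvPPT R := cvPPT_nonneg R hR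
  -- the key spectral bound on σ
  have hb : ∀ xv : ιB → ℂ, (star xv ⬝ᵥ σ *ᵥ xv).re
      ≤ cvPPT Q * (∑ k, Complex.normSq (xv k)) := by
    intro xv
    set n : ℝ := ∑ k, Complex.normSq (xv k) with hn_def
    have hn0 : 0 ≤ n := Finset.sum_nonneg fun k _ => Complex.normSq_nonneg _
    have hsum : (∑ k, star (xv k) * xv k) = (n : ℂ) := by
      rw [hn_def]
      push_cast
      exact Finset.sum_congr rfl fun k _ => by
        rw [Complex.star_def, ← Complex.normSq_eq_conj_mul_self]
    have hpair := sigma_pairing Q Ω xv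
    by_cases hn : n = 0
    · have hxv : xv = 0 := by
        funext k
        have hk : Complex.normSq (xv k) = 0 := by
          have := (Finset.sum_eq_zero_iff_of_nonneg
            (fun k _ => Complex.normSq_nonneg (xv k))).mp (hn_def ▸ hn) k (Finset.mem_univ k)
          exact this
        exact Complex.normSq_eq_zero.mp hk
      rw [hxv, hn]
      simp
    · have hnpos : 0 < n := lt_of_le_of_ne hn0 (Ne.symm hn)
      set Ωx := ptraceA (cmpB0 xv Ω) with hΩx
      have f1 : Ωx.PosSemidef := ptraceA_posSemidef (cmpB0_posSemidef h1)
      have f2 : (ptransposeB Ωx).PosSemidef := by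
        rw [hΩx, cmpB0_ptranspose]
        exact ptraceA_posSemidef (cmpB0_posSemidef h2)
      have f3 : ptraceA Ωx = (n : ℂ) • 1 := by
        rw [hΩx, cmpB0_ptrace_ptrace xv h3, hsum]
      have hninv0 : (0:ℝ) ≤ n⁻¹ := inv_nonneg.mpr hn0
      have feas1 : (((n⁻¹ : ℝ) : ℂ) • Ωx).PosSemidef := smul_psd f1 hninv0
      have feas2 : (ptransposeB (((n⁻¹ : ℝ) : ℂ) • Ωx)).PosSemidef := by
        rw [ptransposeB_smul]; exact smul_psd f2 hninv0
      have feas3 : ptraceA (((n⁻¹ : ℝ) : ℂ) • Ωx) = 1 := by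
        rw [ptraceA_smul, f3, smul_smul]
        rw [show (((n⁻¹ : ℝ) : ℂ) * (n : ℂ)) = 1 by
          push_cast
          exact inv_mul_cancel₀ (by exact_mod_cast hn)]
        exact one_smul _ _
      have hle := le_cvPPT Q feas1 feas2 feas3
      have htr : (Q * (((n⁻¹ : ℝ) : ℂ) • Ωx)).trace = ((n⁻¹ : ℝ) : ℂ) * (Q * Ωx).trace := by
        rw [Matrix.mul_smul, Matrix.trace_smul, smul_eq_mul]
      rw [htr] at hle
      have hre : (((n⁻¹ : ℝ) : ℂ) * (Q * Ωx).trace).re = n⁻¹ * ((Q * Ωx).trace).re := by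
        rw [Complex.mul_re]
        simp
      rw [hre] at hle
      have : ((Q * Ωx).trace).re ≤ n * cvPPT Q := by
        have h' := mul_le_mul_of_nonneg_left hle hn0
        rwa [← mul_assoc, mul_inv_cancel₀ hn, one_mul] at h'
      rw [hpair]
      calc ((Q * Ωx).trace).re ≤ n * cvPPT Q := this
        _ = cvPPT Q * n := mul_comm _ _
  -- main ε-argument
  have hstep : ∀ ε : ℝ, 0 < ε →
      ((tensorCut R Q * Ω).trace).re ≤ (cvPPT Q + ε) * cvPPT R := by
    intro ε hε
    set lam : ℝ := cvPPT Q + ε with hlam_def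
    have hlam : 0 < lam := by
      rw [hlam_def]; linarith
    set M : Matrix ιB ιB ℂ := ((lam : ℝ) : ℂ) • (1 : Matrix ιB ιB ℂ) - σ with hM_def
    have hMps : M.PosSemidef := by
      refine .of_dotProduct_mulVec_nonneg ?_ ?_
      · show Mᴴ = M
        rw [hM_def, Matrix.conjTranspose_sub, Matrix.conjTranspose_smul,
          Matrix.conjTranspose_one, hσ.1.eq, Complex.star_def, Complex.conj_ofReal]
      · intro xv
        have hmv : M *ᵥ xv = ((lam : ℝ) : ℂ) • xv - σ *ᵥ xv := by
          rw [hM_def, Matrix.sub_mulVec, Matrix.smul_mulVec, Matrix.one_mulVec]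
        rw [hmv, dotProduct_sub, dotProduct_smul]
        have hdx : star xv ⬝ᵥ xv = ((∑ k, Complex.normSq (xv k) : ℝ) : ℂ) := by
          push_cast
          simp only [dotProduct, Pi.star_apply]
          exact Finset.sum_congr rfl fun k _ => by
            rw [Complex.star_def, ← Complex.normSq_eq_conj_mul_self]
        rw [hdx]
        set z := star xv ⬝ᵥ σ *ᵥ xv with hz_def
        have hz := (nonneg_iff z).mp (hσ.dotProduct_mulVec_nonneg xv)
        have hzre := hb xv
        rw [nonneg_iff]
        constructor
        · rw [Complex.sub_re, smul_eq_mul, Complex.mul_re]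
          simp only [Complex.ofReal_re, Complex.ofReal_im, zero_mul, sub_zero]
          have hn0 : (0:ℝ) ≤ ∑ k, Complex.normSq (xv k) :=
            Finset.sum_nonneg fun k _ => Complex.normSq_nonneg _
          have : cvPPT Q * (∑ k, Complex.normSq (xv k)) ≤ lam * (∑ k, Complex.normSq (xv k)) := by
            apply mul_le_mul_of_nonneg_right _ hn0
            rw [hlam_def]; linarith
          linarith [hzre]
        · rw [Complex.sub_im, smul_eq_mul, Complex.mul_im]
          simp [hz.2]
    set c : ℝ := (Fintype.card ιA : ℝ)⁻¹ with hc_def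
    have hc0 : (0:ℝ) ≤ c := by rw [hc_def]; positivity
    set D : Matrix (ιA × ιB) (ιA × ιB) ℂ := kron2 (((c : ℝ) : ℂ) • (1 : Matrix ιA ιA ℂ)) M
      with hD_def
    have hcard : (Fintype.card ιA : ℝ) ≠ 0 := by
      exact_mod_cast Fintype.card_ne_zero
    have hDps : D.PosSemidef := kron2_posSemidef (smul_psd Matrix.PosSemidef.one hc0) hMps
    have hDpt : (ptransposeB D).PosSemidef := by
      rw [hD_def, ptransposeB_kron2]
      exact kron2_posSemidef (smul_psd Matrix.PosSemidef.one hc0) hMps.transpose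
    have hDtr : ptraceA D = M := by
      rw [hD_def, ptraceA_kron2, Matrix.trace_smul, Matrix.trace_one, smul_eq_mul]
      rw [show ((c : ℂ) * (Fintype.card ιA : ℂ)) = 1 by
        rw [hc_def]
        push_cast
        exact inv_mul_cancel₀ (by exact_mod_cast hcard)]
      exact one_smul _ _
    have hlaminv : (0:ℝ) ≤ lam⁻¹ := inv_nonneg.mpr hlam.le
    set Ωf := ((lam⁻¹ : ℝ) : ℂ) • (ctrQ Q Ω + D) with hΩf
    have g1 : Ωf.PosSemidef := smul_psd (hctr.add hDps) hlaminv
    have g2 : (ptransposeB Ωf).PosSemidef := by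
      rw [hΩf, ptransposeB_smul, ptransposeB_add]
      exact smul_psd (hΓctr.add hDpt) hlaminv
    have g3 : ptraceA Ωf = 1 := by
      rw [hΩf, ptraceA_smul, ptraceA_add, hDtr, ← hσdef]
      rw [show σ + M = ((lam : ℝ) : ℂ) • (1 : Matrix ιB ιB ℂ) by rw [hM_def]; abel]
      rw [smul_smul, show (((lam⁻¹ : ℝ) : ℂ) * ((lam : ℝ) : ℂ)) = 1 by
        push_cast
        exact inv_mul_cancel₀ (by exact_mod_cast ne_of_gt hlam)]
      exact one_smul _ _
    have hfeas := le_cvPPT R g1 g2 g3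
    have htr2 : (R * Ωf).trace
        = ((lam⁻¹ : ℝ) : ℂ) * ((R * ctrQ Q Ω).trace + (R * D).trace) := by
      rw [hΩf, Matrix.mul_smul, Matrix.trace_smul, smul_eq_mul, Matrix.mul_add,
        Matrix.trace_add]
    have hA0 := (nonneg_iff _).mp (trace_mul_psd_nonneg hR hctr)
    have hD0 := (nonneg_iff _).mp (trace_mul_psd_nonneg hR hDps)
    rw [htr2] at hfeas
    have hfre : (((lam⁻¹ : ℝ) : ℂ) * ((R * ctrQ Q Ω).trace + (R * D).trace)).re
        = lam⁻¹ * (((R * ctrQ Q Ω).trace).re + ((R * D).trace).re) := by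
      rw [Complex.mul_re, Complex.add_re]
      simp
    rw [hfre] at hfeas
    have key : ((R * ctrQ Q Ω).trace).re ≤ lam * cvPPT R := by
      have h' := mul_le_mul_of_nonneg_left hfeas hlam.le
      rw [← mul_assoc, mul_inv_cancel₀ (ne_of_gt hlam), one_mul] at h'
      linarith [hD0.1]
    calc ((tensorCut R Q * Ω).trace).re = ((R * ctrQ Q Ω).trace).re := by
          rw [ctrQ_pairing]
      _ ≤ lam * cvPPT R := key
      _ = (cvPPT Q + ε) * cvPPT R := by rw [hlam_def]
  -- conclude
  by_cases hcvR : cvPPT R = 0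
  · have := hstep 1 one_pos
    rw [hcvR] at this ⊢
    simpa using this
  · have hRpos : 0 < cvPPT R := lt_of_le_of_ne hRnn (Ne.symm hcvR)
    rw [mul_comm]
    refine le_of_forall_pos_le_add fun δ hδ => ?_
    have h' := hstep (δ / cvPPT R) (div_pos hδ hRpos)
    calc ((tensorCut R Q * Ω).trace).re ≤ (cvPPT Q + δ / cvPPT R) * cvPPT R := h'
      _ = cvPPT Q * cvPPT R + δ := by
          field_simp

end CvMain

open CvAux in
/-- The PPT communication value is multiplicative on tensor products of PPT
operators. -/
theorem cvPPT_mult_of_ppt {ιA ιB ιA' ιB' : Type*}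
    [Fintype ιA] [DecidableEq ιA] [Fintype ιB] [DecidableEq ιB]
    [Fintype ιA'] [DecidableEq ιA'] [Fintype ιB'] [DecidableEq ιB']
    (R : Matrix (ιA × ιB) (ιA × ιB) ℂ) (Q : Matrix (ιA' × ιB') (ιA' × ιB') ℂ)
    (hR : R.PosSemidef) (hRppt : (ptransposeB R).PosSemidef)
    (hQ : Q.PosSemidef) (hQppt : (ptransposeB Q).PosSemidef) :
    cvPPT (tensorCut R Q) = cvPPT R * cvPPT Q := by
  classical
  have hLpsd : (tensorCut R Q).PosSemidef := tensorCut_posSemidef hR hQ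
  have hLnn : 0 ≤ cvPPT (tensorCut R Q) := cvPPT_nonneg _ hLpsd
  have hRnn : 0 ≤ cvPPT R := cvPPT_nonneg R hR
  have hQnn : 0 ≤ cvPPT Q := cvPPT_nonneg Q hQ
  refine le_antisymm ?upper ?lower
  case upper =>
    unfold cvPPT
    refine Real.sSup_le ?_ (mul_nonneg hRnn hQnn)
    rintro r ⟨Ω, h1, h2, h3, rfl⟩
    by_cases hA : Nonempty ιA
    · exact upper_pointwise R Q hR hQ hQppt h1 h2 h3
    · haveI : IsEmpty ιA := not_nonempty_iff.mp hA
      by_cases hBB : Nonempty (ιB × ιB')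
      · exfalso
        obtain ⟨b⟩ := hBB
        have h0 := congrFun (congrFun h3 b) b
        simp [ptraceA, Matrix.one_apply] at h0
      · haveI : IsEmpty (ιB × ιB') := not_nonempty_iff.mp hBB
        have htr0 : (tensorCut R Q * Ω).trace = 0 := by
          simp [Matrix.trace]
        rw [htr0]
        simp only [Complex.zero_re]
        exact mul_nonneg hRnn hQnn
  case lower =>
    -- values are achieved multiplicatively
    have hmem : ∀ r₁ ∈ {r | ∃ Ω : Matrix (ιA × ιB) (ιA × ιB) ℂ,
        Ω.PosSemidef ∧ (ptransposeB Ω).PosSemidef ∧ ptraceA Ω = 1 ∧ r = ((R * Ω).trace).re},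
        ∀ r₂ ∈ {r | ∃ Ω : Matrix (ιA' × ιB') (ιA' × ιB') ℂ,
        Ω.PosSemidef ∧ (ptransposeB Ω).PosSemidef ∧ ptraceA Ω = 1 ∧ r = ((Q * Ω).trace).re},
        r₁ * r₂ ≤ cvPPT (tensorCut R Q) := by
      rintro r₁ ⟨Ω₁, g1, g2, g3, rfl⟩ r₂ ⟨Ω₂, k1, k2, k3, rfl⟩
      have f1 : (tensorCut Ω₁ Ω₂).PosSemidef := tensorCut_posSemidef g1 k1
      have f2 : (ptransposeB (tensorCut Ω₁ Ω₂)).PosSemidef := by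
        rw [ptransposeB_tensorCut]
        exact tensorCut_posSemidef g2 k2
      have f3 : ptraceA (tensorCut Ω₁ Ω₂) = 1 := by
        rw [ptraceA_tensorCut, g3, k3, kron2_one_one]
      have hval : (tensorCut R Q * tensorCut Ω₁ Ω₂).trace
          = (R * Ω₁).trace * (Q * Ω₂).trace := by
        rw [← tensorCut_mul, trace_tensorCut]
      have him1 := (nonneg_iff _).mp (trace_mul_psd_nonneg hR g1)
      have him2 := (nonneg_iff _).mp (trace_mul_psd_nonneg hQ k1)
      have hre : ((tensorCut R Q * tensorCut Ω₁ Ω₂).trace).re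
          = ((R * Ω₁).trace).re * ((Q * Ω₂).trace).re := by
        rw [hval, Complex.mul_re, him1.2, him2.2]
        ring
      rw [← hre]
      exact le_cvPPT _ f1 f2 f3
    -- sup juggling
    by_cases hSR : ∃ Ω : Matrix (ιA × ιB) (ιA × ιB) ℂ,
        Ω.PosSemidef ∧ (ptransposeB Ω).PosSemidef ∧ ptraceA Ω = 1
    · by_cases hSQ : ∃ Ω : Matrix (ιA' × ιB') (ιA' × ιB') ℂ,
          Ω.PosSemidef ∧ (ptransposeB Ω).PosSemidef ∧ ptraceA Ω = 1
      · -- both nonempty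
        have claim1 : ∀ r₂ ∈ {r | ∃ Ω : Matrix (ιA' × ιB') (ιA' × ιB') ℂ,
            Ω.PosSemidef ∧ (ptransposeB Ω).PosSemidef ∧ ptraceA Ω = 1 ∧ r = ((Q * Ω).trace).re},
            cvPPT R * r₂ ≤ cvPPT (tensorCut R Q) := by
          intro r₂ hr₂
          obtain ⟨Ω₂, k1, k2, k3, hr₂eq⟩ := hr₂
          have hr₂0 : 0 ≤ r₂ := by
            rw [hr₂eq]; exact ((nonneg_iff _).mp (trace_mul_psd_nonneg hQ k1)).1
          rcases eq_or_lt_of_le hr₂0 with heq | hpos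
          · rw [← heq, mul_zero]; exact hLnn
          · have : cvPPT R ≤ cvPPT (tensorCut R Q) / r₂ := by
              unfold cvPPT
              refine Real.sSup_le ?_ (div_nonneg hLnn hr₂0)
              intro r₁ hr₁
              rw [le_div_iff₀ hpos]
              exact hmem r₁ hr₁ r₂ ⟨Ω₂, k1, k2, k3, hr₂eq⟩
            calc cvPPT R * r₂ ≤ (cvPPT (tensorCut R Q) / r₂) * r₂ :=
                  mul_le_mul_of_nonneg_right this hr₂0
              _ = cvPPT (tensorCut R Q) := div_mul_cancel₀ _ (ne_of_gt hpos)
        rcases eq_or_lt_of_le hRnn with heqR | hposR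
        · rw [← heqR, zero_mul]; exact hLnn
        · have : cvPPT Q ≤ cvPPT (tensorCut R Q) / cvPPT R := by
            conv_lhs => unfold cvPPT
            refine Real.sSup_le ?_ (div_nonneg hLnn hRnn)
            intro r₂ hr₂
            rw [le_div_iff₀ hposR, mul_comm]
            exact claim1 r₂ hr₂
          calc cvPPT R * cvPPT Q ≤ cvPPT R * (cvPPT (tensorCut R Q) / cvPPT R) :=
                mul_le_mul_of_nonneg_left this hRnn
            _ = cvPPT (tensorCut R Q) := mul_div_cancel₀ _ (ne_of_gt hposR)
      · -- S_Q empty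
        have : cvPPT Q = 0 := by
          unfold cvPPT
          rw [show {r | ∃ Ω : Matrix (ιA' × ιB') (ιA' × ιB') ℂ,
              Ω.PosSemidef ∧ (ptransposeB Ω).PosSemidef ∧ ptraceA Ω = 1 ∧ r = ((Q * Ω).trace).re}
              = (∅ : Set ℝ) by
            ext r
            simp only [Set.mem_setOf_eq, Set.mem_empty_iff_false, iff_false]
            rintro ⟨Ω, a1, a2, a3, _⟩
            exact hSQ ⟨Ω, a1, a2, a3⟩]
          exact Real.sSup_empty
        rw [this, mul_zero]
        exact hLnn
    · have : cvPPT R = 0 := by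
        unfold cvPPT
        rw [show {r | ∃ Ω : Matrix (ιA × ιB) (ιA × ιB) ℂ,
            Ω.PosSemidef ∧ (ptransposeB Ω).PosSemidef ∧ ptraceA Ω = 1 ∧ r = ((R * Ω).trace).re}
            = (∅ : Set ℝ) by
          ext r
          simp only [Set.mem_setOf_eq, Set.mem_empty_iff_false, iff_false]
          rintro ⟨Ω, a1, a2, a3, _⟩
          exact hSR ⟨Ω, a1, a2, a3⟩]
        exact Real.sSup_empty
      rw [this, zero_mul]
      exact hLnn
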